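/- The commutator norm controls the first-order order-swap difference: for matrices A, B, ‖exp(A)exp(B) − exp(B)exp(A)‖ ≤ ‖[A,B]‖ · e^{‖A‖+‖B‖}. -/

import Mathlib

open NormedSpace

set_option maxHeartbeats 1000000

section Aux
variable {𝔸 : Type*} [NormedRing 𝔸]

lemma norm_pow_mul_le'' (B C : 𝔸) (n : ℕ) : ‖B ^ n * C‖ ≤ ‖B‖ ^ n * ‖C‖ := by
  cases n with
  | zero => simp
  | succ k =>
    calc ‖B ^ (k+1) * C‖ ≤ ‖B ^ (k+1)‖ * ‖C‖ := norm_mul_le _ _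
    _ ≤ ‖B‖ ^ (k+1) * ‖C‖ := by gcongr; exact norm_pow_le' B k.succ_pos

lemma norm_mul_pow_le'' (C A : 𝔸) (m : ℕ) : ‖C * A ^ m‖ ≤ ‖C‖ * ‖A‖ ^ m := by
  cases m with
  | zero => simp
  | succ k =>
    calc ‖C * A ^ (k+1)‖ ≤ ‖C‖ * ‖A ^ (k+1)‖ := norm_mul_le _ _
    _ ≤ ‖C‖ * ‖A‖ ^ (k+1) := by gcongr; exact norm_pow_le' A k.succ_pos

lemma comm_pow_right_bound (A B : 𝔸) (n : ℕ) :
    ‖A * B ^ n - B ^ n * A‖ ≤ n * ‖B‖ ^ (n - 1) * ‖A * B - B * A‖ := by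
  induction n with
  | zero => simp
  | succ n ih =>
    have key : A * B ^ (n+1) - B ^ (n+1) * A
        = (A * B ^ n - B ^ n * A) * B + B ^ n * (A * B - B * A) := by
      rw [pow_succ]; noncomm_ring
    have h1 : ‖(A * B ^ n - B ^ n * A) * B‖ ≤ (n * ‖B‖ ^ (n - 1) * ‖A * B - B * A‖) * ‖B‖ :=
      le_trans (norm_mul_le _ _) (by gcongr)
    have h2 : ‖B ^ n * (A * B - B * A)‖ ≤ ‖B‖ ^ n * ‖A * B - B * A‖ := norm_pow_mul_le'' _ _ _
    have hle : (n : ℝ) * ‖B‖ ^ (n - 1) * ‖B‖ ≤ n * ‖B‖ ^ n := by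
      cases n with
      | zero => simp
      | succ k =>
        simp only [Nat.add_sub_cancel]
        rw [mul_assoc, ← pow_succ]
    calc ‖A * B ^ (n+1) - B ^ (n+1) * A‖
        ≤ ‖(A * B ^ n - B ^ n * A) * B‖ + ‖B ^ n * (A * B - B * A)‖ := by
          rw [key]; exact norm_add_le _ _
      _ ≤ (n * ‖B‖ ^ (n - 1) * ‖A * B - B * A‖) * ‖B‖ + ‖B‖ ^ n * ‖A * B - B * A‖ :=
          add_le_add h1 h2
      _ = ((n : ℝ) * ‖B‖ ^ (n - 1) * ‖B‖) * ‖A * B - B * A‖ + ‖B‖ ^ n * ‖A * B - B * A‖ := by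
          ring
      _ ≤ ((n : ℝ) * ‖B‖ ^ n) * ‖A * B - B * A‖ + ‖B‖ ^ n * ‖A * B - B * A‖ := by
          gcongr
      _ = (↑(n + 1)) * ‖B‖ ^ ((n + 1) - 1) * ‖A * B - B * A‖ := by
          simp only [Nat.add_sub_cancel]; push_cast; ring

lemma comm_pow_pow_bound (A B : 𝔸) (m n : ℕ) :
    ‖A ^ m * B ^ n - B ^ n * A ^ m‖ ≤
      (m * n : ℝ) * ‖A‖ ^ (m - 1) * ‖B‖ ^ (n - 1) * ‖A * B - B * A‖ := by
  induction m with
  | zero => simp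
  | succ m ih =>
    have key : A ^ (m+1) * B ^ n - B ^ n * A ^ (m+1)
        = A * (A ^ m * B ^ n - B ^ n * A ^ m) + (A * B ^ n - B ^ n * A) * A ^ m := by
      rw [pow_succ']; noncomm_ring
    have h1 : ‖A * (A ^ m * B ^ n - B ^ n * A ^ m)‖
        ≤ ‖A‖ * ((m * n : ℝ) * ‖A‖ ^ (m - 1) * ‖B‖ ^ (n - 1) * ‖A * B - B * A‖) :=
      le_trans (norm_mul_le _ _) (by gcongr)
    have h2 : ‖(A * B ^ n - B ^ n * A) * A ^ m‖
        ≤ ((n : ℝ) * ‖B‖ ^ (n - 1) * ‖A * B - B * A‖) * ‖A‖ ^ m :=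
      le_trans (norm_mul_pow_le'' _ _ _) (by gcongr; exact comm_pow_right_bound A B n)
    have hle : ‖A‖ * ((m : ℝ) * ‖A‖ ^ (m - 1)) ≤ (m : ℝ) * ‖A‖ ^ m := by
      cases m with
      | zero => simp
      | succ k =>
        simp only [Nat.add_sub_cancel]
        rw [pow_succ']; ring_nf; exact le_rfl
    calc ‖A ^ (m+1) * B ^ n - B ^ n * A ^ (m+1)‖
        ≤ ‖A * (A ^ m * B ^ n - B ^ n * A ^ m)‖ + ‖(A * B ^ n - B ^ n * A) * A ^ m‖ := by
          rw [key]; exact norm_add_le _ _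
      _ ≤ ‖A‖ * ((m * n : ℝ) * ‖A‖ ^ (m - 1) * ‖B‖ ^ (n - 1) * ‖A * B - B * A‖)
            + ((n : ℝ) * ‖B‖ ^ (n - 1) * ‖A * B - B * A‖) * ‖A‖ ^ m := add_le_add h1 h2
      _ = (‖A‖ * ((m : ℝ) * ‖A‖ ^ (m - 1))) * ((n : ℝ) * ‖B‖ ^ (n - 1) * ‖A * B - B * A‖)
            + ((n : ℝ) * ‖B‖ ^ (n - 1) * ‖A * B - B * A‖) * ‖A‖ ^ m := by ring
      _ ≤ ((m : ℝ) * ‖A‖ ^ m) * ((n : ℝ) * ‖B‖ ^ (n - 1) * ‖A * B - B * A‖)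
            + ((n : ℝ) * ‖B‖ ^ (n - 1) * ‖A * B - B * A‖) * ‖A‖ ^ m := by
          gcongr
      _ = (↑(m + 1) * n : ℝ) * ‖A‖ ^ ((m + 1) - 1) * ‖B‖ ^ (n - 1) * ‖A * B - B * A‖ := by
          simp only [Nat.add_sub_cancel]; push_cast; ring
end Aux

/-- The commutator norm controls the order-swap difference:
`‖exp A * exp B - exp B * exp A‖ ≤ ‖A * B - B * A‖ * e^(‖A‖ + ‖B‖)`. -/
theorem order_swap_bound_by_commutator {𝔸 : Type*} [NormedRing 𝔸]
    [NormedAlgebra ℝ 𝔸] [CompleteSpace 𝔸] (A B : 𝔸) :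
    ‖exp A * exp B - exp B * exp A‖ ≤
      ‖A * B - B * A‖ * Real.exp (‖A‖ + ‖B‖) := by
  have hfA : Summable fun n : ℕ => ‖((Nat.factorial n : ℝ))⁻¹ • A ^ n‖ := norm_expSeries_summable' A
  have hfB : Summable fun n : ℕ => ‖((Nat.factorial n : ℝ))⁻¹ • B ^ n‖ := norm_expSeries_summable' B
  have hAB : exp A * exp B
      = ∑' z : ℕ × ℕ, (Nat.factorial z.1 : ℝ)⁻¹ • A ^ z.1 * ((Nat.factorial z.2 : ℝ)⁻¹ • B ^ z.2) := by
    simp only [exp_eq_tsum ℝ]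
    exact tsum_mul_tsum_of_summable_norm hfA hfB
  have hBA : exp B * exp A
      = ∑' z : ℕ × ℕ, (Nat.factorial z.2 : ℝ)⁻¹ • B ^ z.2 * ((Nat.factorial z.1 : ℝ)⁻¹ • A ^ z.1) := by
    simp only [exp_eq_tsum ℝ]
    rw [tsum_mul_tsum_of_summable_norm hfB hfA]
    exact ((Equiv.prodComm ℕ ℕ).tsum_eq
      (fun z : ℕ × ℕ => (Nat.factorial z.1 : ℝ)⁻¹ • B ^ z.1 * ((Nat.factorial z.2 : ℝ)⁻¹ • A ^ z.2))).symm
  have hsum1 : Summable fun z : ℕ × ℕ =>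
      (Nat.factorial z.1 : ℝ)⁻¹ • A ^ z.1 * ((Nat.factorial z.2 : ℝ)⁻¹ • B ^ z.2) :=
    summable_mul_of_summable_norm hfA hfB
  have hsum2 : Summable fun z : ℕ × ℕ =>
      (Nat.factorial z.2 : ℝ)⁻¹ • B ^ z.2 * ((Nat.factorial z.1 : ℝ)⁻¹ • A ^ z.1) :=
    ((Equiv.prodComm ℕ ℕ).summable_iff).2 (summable_mul_of_summable_norm hfB hfA)
  set t : ℕ × ℕ → 𝔸 := fun z =>
    ((Nat.factorial z.1 * Nat.factorial z.2 : ℝ))⁻¹ • (A ^ z.1 * B ^ z.2 - B ^ z.2 * A ^ z.1) with ht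
  have hterm : ∀ z : ℕ × ℕ,
      (Nat.factorial z.1 : ℝ)⁻¹ • A ^ z.1 * ((Nat.factorial z.2 : ℝ)⁻¹ • B ^ z.2)
        - (Nat.factorial z.2 : ℝ)⁻¹ • B ^ z.2 * ((Nat.factorial z.1 : ℝ)⁻¹ • A ^ z.1) = t z := by
    intro z
    show _ = ((Nat.factorial z.1 : ℝ) * (Nat.factorial z.2 : ℝ))⁻¹ •
      (A ^ z.1 * B ^ z.2 - B ^ z.2 * A ^ z.1)
    rw [smul_mul_smul_comm, smul_mul_smul_comm, mul_comm (Nat.factorial z.2 : ℝ)⁻¹,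
      ← smul_sub, ← mul_inv]
  have hdiff : exp A * exp B - exp B * exp A = ∑' z : ℕ × ℕ, t z := by
    rw [hAB, hBA, ← Summable.tsum_sub hsum1 hsum2]
    exact tsum_congr hterm
  set u : ℕ → ℝ := fun m => m * ‖A‖ ^ (m - 1) / Nat.factorial m with hu_def
  set v : ℕ → ℝ := fun n => n * ‖B‖ ^ (n - 1) / Nat.factorial n with hv_def
  have hu0 : ∀ m, 0 ≤ u m := fun m => by rw [hu_def]; positivity
  have hv0 : ∀ n, 0 ≤ v n := fun n => by rw [hv_def]; positivity
  have hbound : ∀ z : ℕ × ℕ, ‖t z‖ ≤ u z.1 * v z.2 * ‖A * B - B * A‖ := by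
    intro z
    rw [ht, norm_smul, Real.norm_eq_abs, abs_inv, abs_of_nonneg (by positivity)]
    have h := comm_pow_pow_bound A B z.1 z.2
    have hfac : (0:ℝ) < Nat.factorial z.1 * Nat.factorial z.2 := by positivity
    rw [hu_def, hv_def]
    calc (Nat.factorial z.1 * Nat.factorial z.2 : ℝ)⁻¹ * ‖A ^ z.1 * B ^ z.2 - B ^ z.2 * A ^ z.1‖
        ≤ (Nat.factorial z.1 * Nat.factorial z.2 : ℝ)⁻¹ *
          ((z.1 * z.2 : ℝ) * ‖A‖ ^ (z.1 - 1) * ‖B‖ ^ (z.2 - 1) * ‖A * B - B * A‖) := by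
          gcongr
      _ = (z.1 * ‖A‖ ^ (z.1 - 1) / Nat.factorial z.1) * (z.2 * ‖B‖ ^ (z.2 - 1) / Nat.factorial z.2)
            * ‖A * B - B * A‖ := by
          rw [mul_inv]
          ring
  have hushift : (fun m : ℕ => u (m + 1)) = fun m => ‖A‖ ^ m / Nat.factorial m := by
    funext m
    rw [hu_def]
    simp only [Nat.factorial_succ]
    push_cast
    rw [mul_div_mul_left _ _ (by positivity)]
  have hvshift : (fun n : ℕ => v (n + 1)) = fun n => ‖B‖ ^ n / Nat.factorial n := by
    funext n
    rw [hv_def]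
    simp only [Nat.factorial_succ]
    push_cast
    rw [mul_div_mul_left _ _ (by positivity)]
  have hu : Summable u := by
    rw [← summable_nat_add_iff 1, hushift]
    exact Real.summable_pow_div_factorial ‖A‖
  have hv : Summable v := by
    rw [← summable_nat_add_iff 1, hvshift]
    exact Real.summable_pow_div_factorial ‖B‖
  have htu : ∑' m, u m = Real.exp ‖A‖ := by
    rw [Summable.tsum_eq_zero_add hu]
    simp only [hushift]
    rw [Real.exp_eq_exp_ℝ, exp_eq_tsum_div]
    simp [hu_def]
  have htv : ∑' n, v n = Real.exp ‖B‖ := by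
    rw [Summable.tsum_eq_zero_add hv]
    simp only [hvshift]
    rw [Real.exp_eq_exp_ℝ, exp_eq_tsum_div]
    simp [hv_def]
  have hsumbound : Summable fun z : ℕ × ℕ => u z.1 * v z.2 * ‖A * B - B * A‖ :=
    (hu.mul_of_nonneg hv hu0 hv0).mul_right _
  have hsumt : Summable fun z : ℕ × ℕ => ‖t z‖ :=
    Summable.of_nonneg_of_le (fun _ => norm_nonneg _) hbound hsumbound
  have hprod : (∑' m, u m) * (∑' n, v n) = ∑' z : ℕ × ℕ, u z.1 * v z.2 :=
    tsum_mul_tsum_of_summable_norm (by simpa using hu.abs) (by simpa using hv.abs)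
  calc ‖exp A * exp B - exp B * exp A‖ = ‖∑' z : ℕ × ℕ, t z‖ := by rw [hdiff]
    _ ≤ ∑' z : ℕ × ℕ, ‖t z‖ := norm_tsum_le_tsum_norm hsumt
    _ ≤ ∑' z : ℕ × ℕ, u z.1 * v z.2 * ‖A * B - B * A‖ := Summable.tsum_le_tsum hbound hsumt hsumbound
    _ = (∑' z : ℕ × ℕ, u z.1 * v z.2) * ‖A * B - B * A‖ := tsum_mul_right
    _ = ‖A * B - B * A‖ * Real.exp (‖A‖ + ‖B‖) := by
        rw [← hprod, htu, htv, Real.exp_add]; ring
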